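/- Let a > 0, let f ∈ C⁰([0,1]) and g ∈ C¹([0,1]), and fix a positive integer n and a time t > 0. For ε > 0 with 1 − 4 a² n² ε² π² > 0, define α_{n±} = (−1 ± √(1 − 4 a² n² ε² π²))/(2ε), c_n = ∫₀¹ f(x) sin(n π x) dx − (2ε/√(1 − 4 a² n² ε² π²)) ∫₀¹ (f(x)/(2ε) − g'(x)) sin(n π x) dx, d_n = ∫₀¹ f(x) sin(n π x) dx + (2ε/√(1 − 4 a² n² ε² π²)) ∫₀¹ (f(x)/(2ε) − g'(x)) sin(n π x) dx, and A_n(t) = c_n e^{α_{n−} t} + d_n e^{α_{n+} t}. Then A_n(t) → a_n := 2 ∫₀¹ f(x) sin(n π x) dx as ε → 0⁺. -/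

import Mathlib

open Set Real Filter MeasureTheory

/-- In the case `b = 0`, for a fixed mode `n` and a fixed time `t > 0`, the amplitude
`A_n(t) = c_n e^{α_{n−}t} + d_n e^{α_{n+}t}` converges, as `ε → 0⁺`, to the Fourier sine
coefficient `a_n = 2∫₀¹ f(x) sin(nπx) dx` of the equilibrium solution. -/
theorem mode_amplitude_limit
    (a : ℝ) (ha : 0 < a) (f g : ℝ → ℝ)
    (hf : ContinuousOn f (Icc 0 1)) (hg : ContDiffOn ℝ 1 g (Icc 0 1))
    (n : ℕ) (hn : 0 < n) (t : ℝ) (ht : 0 < t) :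
    Filter.Tendsto (fun ε : ℝ =>
      ((∫ x in (0:ℝ)..1, f x * Real.sin (n * π * x))
          - (2 * ε / Real.sqrt (1 - 4 * a ^ 2 * n ^ 2 * ε ^ 2 * π ^ 2)) *
            ∫ x in (0:ℝ)..1, (f x / (2 * ε) - deriv g x) * Real.sin (n * π * x)) *
        Real.exp ((-1 - Real.sqrt (1 - 4 * a ^ 2 * n ^ 2 * ε ^ 2 * π ^ 2)) / (2 * ε) * t)
      + ((∫ x in (0:ℝ)..1, f x * Real.sin (n * π * x))
          + (2 * ε / Real.sqrt (1 - 4 * a ^ 2 * n ^ 2 * ε ^ 2 * π ^ 2)) *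
            ∫ x in (0:ℝ)..1, (f x / (2 * ε) - deriv g x) * Real.sin (n * π * x)) *
        Real.exp ((-1 + Real.sqrt (1 - 4 * a ^ 2 * n ^ 2 * ε ^ 2 * π ^ 2)) / (2 * ε) * t))
      (nhdsWithin 0 (Set.Ioi 0))
      (nhds (2 * ∫ x in (0:ℝ)..1, f x * Real.sin (n * π * x))) := by
  -- abbreviations
  set F : ℝ := ∫ x in (0:ℝ)..1, f x * Real.sin (n * π * x) with hFdef
  set Gd : ℝ := ∫ x in (0:ℝ)..1, deriv g x * Real.sin (n * π * x) with hGddef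
  set s : ℝ → ℝ := fun ε => Real.sqrt (1 - 4 * a ^ 2 * n ^ 2 * ε ^ 2 * π ^ 2) with hsdef
  -- integrability
  have hsin : Continuous fun x : ℝ => Real.sin (n * π * x) := by fun_prop
  have hfint : IntervalIntegrable (fun x => f x * Real.sin (n * π * x)) volume 0 1 :=
    (hf.mul hsin.continuousOn).intervalIntegrable_of_Icc zero_le_one
  have hgint : IntervalIntegrable (fun x => deriv g x * Real.sin (n * π * x)) volume 0 1 := by
    have hcd : ContinuousOn (fun x => derivWithin g (Icc 0 1) x) (Icc 0 1) :=
      hg.continuousOn_derivWithin (uniqueDiffOn_Icc one_pos) le_rfl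
    have h1 : IntervalIntegrable (fun x => derivWithin g (Icc 0 1) x * Real.sin (n * π * x))
        volume 0 1 :=
      (hcd.mul hsin.continuousOn).intervalIntegrable_of_Icc zero_le_one
    rw [intervalIntegrable_iff] at h1 ⊢
    refine h1.congr ?_
    rw [Filter.EventuallyEq, ae_restrict_iff' measurableSet_uIoc, ae_iff]
    refine measure_mono_null ?_ (measure_singleton 1)
    intro x hx
    simp only [Set.mem_setOf_eq, not_forall] at hx
    obtain ⟨hx2, hne⟩ := hx
    rw [Set.uIoc_of_le zero_le_one] at hx2
    by_contra h1'
    apply hne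
    have hx3 : x ∈ Ioo (0:ℝ) 1 := ⟨hx2.1, lt_of_le_of_ne hx2.2 h1'⟩
    rw [derivWithin_of_mem_nhds (Icc_mem_nhds hx3.1 hx3.2)]
  -- the key algebraic rewrite
  have key : ∀ ε : ℝ, ε ∈ Ioi (0:ℝ) →
      (2 * ε / s ε) * ∫ x in (0:ℝ)..1, (f x / (2 * ε) - deriv g x) * Real.sin (n * π * x)
        = (F - 2 * ε * Gd) / s ε := by
    intro ε hε
    have hε0 : (ε : ℝ) ≠ 0 := ne_of_gt hε
    have hrw : (fun x => (f x / (2 * ε) - deriv g x) * Real.sin (n * π * x))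
        = fun x => (1 / (2 * ε)) * (f x * Real.sin (n * π * x))
            - deriv g x * Real.sin (n * π * x) := by
      funext x; ring
    rw [hrw, intervalIntegral.integral_sub (hfint.const_mul _) hgint,
      intervalIntegral.integral_const_mul, div_mul_eq_mul_div]
    rw [← hFdef, ← hGddef]
    congr 1
    field_simp
  -- limits of ingredients
  have hrad : Filter.Tendsto (fun ε : ℝ => 1 - 4 * a ^ 2 * n ^ 2 * ε ^ 2 * π ^ 2)
      (nhdsWithin 0 (Set.Ioi 0)) (nhds 1) := by
    have hc : Continuous fun ε : ℝ => 1 - 4 * a ^ 2 * n ^ 2 * ε ^ 2 * π ^ 2 := by fun_prop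
    have := (hc.tendsto 0).mono_left (nhdsWithin_le_nhds (s := Set.Ioi (0:ℝ)))
    simpa using this
  have hs : Filter.Tendsto s (nhdsWithin 0 (Set.Ioi 0)) (nhds 1) := by
    have := (Real.continuous_sqrt.tendsto 1).comp hrad
    simpa [hsdef, Function.comp_def] using this
  have hd : Filter.Tendsto (fun ε : ℝ => (F - 2 * ε * Gd) / s ε)
      (nhdsWithin 0 (Set.Ioi 0)) (nhds F) := by
    have hnum : Filter.Tendsto (fun ε : ℝ => F - 2 * ε * Gd)
        (nhdsWithin 0 (Set.Ioi 0)) (nhds F) := by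
      have hc : Continuous fun ε : ℝ => F - 2 * ε * Gd := by fun_prop
      have := (hc.tendsto 0).mono_left (nhdsWithin_le_nhds (s := Set.Ioi (0:ℝ)))
      simpa using this
    have := hnum.div hs one_ne_zero; rw [div_one] at this; exact this
  have hpos : ∀ᶠ ε in nhdsWithin (0:ℝ) (Set.Ioi 0),
      0 < 1 - 4 * a ^ 2 * n ^ 2 * ε ^ 2 * π ^ 2 :=
    hrad.eventually (eventually_gt_nhds one_pos)
  -- the exponent α₊ tends to 0
  have hexpP : Filter.Tendsto (fun ε : ℝ => Real.exp ((-1 + s ε) / (2 * ε) * t))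
      (nhdsWithin 0 (Set.Ioi 0)) (nhds 1) := by
    have heq : ∀ᶠ ε in nhdsWithin (0:ℝ) (Set.Ioi 0),
        (-1 + s ε) / (2 * ε) = -(4 * a ^ 2 * n ^ 2 * π ^ 2 * ε) / (2 * (1 + s ε)) := by
      filter_upwards [hpos, self_mem_nhdsWithin] with ε h1 h2
      have hε0 : (ε : ℝ) ≠ 0 := ne_of_gt h2
      have hs0 : 0 ≤ s ε := Real.sqrt_nonneg _
      have hsq : s ε ^ 2 = 1 - 4 * a ^ 2 * n ^ 2 * ε ^ 2 * π ^ 2 := Real.sq_sqrt h1.le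
      have h1s : (1 + s ε) ≠ 0 := by positivity
      field_simp
      nlinarith [hsq]
    have hlim : Filter.Tendsto (fun ε : ℝ => -(4 * a ^ 2 * n ^ 2 * π ^ 2 * ε) / (2 * (1 + s ε)))
        (nhdsWithin 0 (Set.Ioi 0)) (nhds 0) := by
      have hnum : Filter.Tendsto (fun ε : ℝ => -(4 * a ^ 2 * n ^ 2 * π ^ 2 * ε))
          (nhdsWithin 0 (Set.Ioi 0)) (nhds 0) := by
        have hc : Continuous fun ε : ℝ => -(4 * a ^ 2 * n ^ 2 * π ^ 2 * ε) := by fun_prop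
        have := (hc.tendsto 0).mono_left (nhdsWithin_le_nhds (s := Set.Ioi (0:ℝ)))
        simpa using this
      have hden : Filter.Tendsto (fun ε : ℝ => 2 * (1 + s ε))
          (nhdsWithin 0 (Set.Ioi 0)) (nhds 4) := by
        have := (tendsto_const_nhds (x := (2:ℝ))).mul ((tendsto_const_nhds (x := (1:ℝ))).add hs)
        norm_num at this
        exact this
      have := hnum.div hden (by norm_num); rw [zero_div] at this; exact this
    have hαt : Filter.Tendsto (fun ε : ℝ => (-1 + s ε) / (2 * ε) * t)
        (nhdsWithin 0 (Set.Ioi 0)) (nhds 0) := by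
      have h0 := hlim.mul_const t
      rw [zero_mul] at h0
      refine h0.congr' ?_
      filter_upwards [heq] with ε h
      rw [h]
    have := (Real.continuous_exp.tendsto 0).comp hαt
    simpa [Function.comp_def] using this
  -- the first term tends to 0
  have hterm1 : Filter.Tendsto (fun ε : ℝ =>
      (F - (F - 2 * ε * Gd) / s ε) * Real.exp ((-1 - s ε) / (2 * ε) * t))
      (nhdsWithin 0 (Set.Ioi 0)) (nhds 0) := by
    have hcoef : Filter.Tendsto (fun ε : ℝ => F - (F - 2 * ε * Gd) / s ε)
        (nhdsWithin 0 (Set.Ioi 0)) (nhds 0) := by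
      have := (tendsto_const_nhds (x := F)).sub hd
      simpa using this
    have habs : Filter.Tendsto (fun ε : ℝ => |F - (F - 2 * ε * Gd) / s ε|)
        (nhdsWithin 0 (Set.Ioi 0)) (nhds 0) := by
      have := hcoef.abs
      simpa using this
    refine squeeze_zero_norm' ?_ habs
    filter_upwards [self_mem_nhdsWithin] with ε hε
    have hε0 : (0:ℝ) < ε := hε
    have hs0 : 0 ≤ s ε := Real.sqrt_nonneg _
    have hexple : Real.exp ((-1 - s ε) / (2 * ε) * t) ≤ 1 := by
      rw [Real.exp_le_one_iff]
      apply mul_nonpos_of_nonpos_of_nonneg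
      · apply div_nonpos_of_nonpos_of_nonneg <;> linarith
      · exact ht.le
    have hexp0 : 0 < Real.exp ((-1 - s ε) / (2 * ε) * t) := Real.exp_pos _
    rw [Real.norm_eq_abs, abs_mul, abs_of_pos hexp0]
    calc |F - (F - 2 * ε * Gd) / s ε| * Real.exp ((-1 - s ε) / (2 * ε) * t)
        ≤ |F - (F - 2 * ε * Gd) / s ε| * 1 := by
          exact mul_le_mul_of_nonneg_left hexple (abs_nonneg _)
      _ = |F - (F - 2 * ε * Gd) / s ε| := mul_one _
  -- the second term tends to 2F
  have hterm2 : Filter.Tendsto (fun ε : ℝ =>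
      (F + (F - 2 * ε * Gd) / s ε) * Real.exp ((-1 + s ε) / (2 * ε) * t))
      (nhdsWithin 0 (Set.Ioi 0)) (nhds (2 * F)) := by
    have := ((tendsto_const_nhds (x := F)).add hd).mul hexpP
    have h2 : (F + F) * 1 = 2 * F := by ring
    rwa [h2] at this
  -- combine
  have hsum := hterm1.add hterm2
  rw [zero_add] at hsum
  refine hsum.congr' ?_
  filter_upwards [self_mem_nhdsWithin] with ε hε
  rw [key ε hε]
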